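/- Let G be a finite abelian p-group and T a subgroup of index p. Let M be a subgroup of index p^2 contained in T, with G-levels (l, L) and T-levels (l_c, L_c). Then l_c = L_c, and: G[p^l] ⊆ T if and only if l = l_c = L_c < L; moreover G[p^l] ⊄ T if and only if l ≤ l_c = L_c = L. -/

import Mathlib

/-- The `p^i`-torsion subgroup `G[p^i] = {x ∈ G : p^i • x = 0}`. -/
def pTors (p i : ℕ) (G : Type*) [AddCommGroup G] : AddSubgroup G where
  carrier := {x | (p ^ i) • x = 0}
  zero_mem' := by simp
  add_mem' := by
    intro a b ha hb
    simp only [Set.mem_setOf_eq, smul_add] at *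
    rw [ha, hb, add_zero]
  neg_mem' := by
    intro a ha
    simp only [Set.mem_setOf_eq, smul_neg] at *
    rw [ha, neg_zero]


lemma mem_pTors {p i : ℕ} {G : Type*} [AddCommGroup G] {x : G} :
    x ∈ pTors p i G ↔ p ^ i • x = 0 := Iff.rfl

lemma pTors_mono (p : ℕ) (G : Type*) [AddCommGroup G] {i j : ℕ} (h : i ≤ j) :
    pTors p i G ≤ pTors p j G := by
  intro x hx
  rw [mem_pTors] at hx ⊢
  rw [← Nat.sub_add_cancel h, pow_add, mul_smul, hx, smul_zero]

lemma pTors_zero (p : ℕ) (G : Type*) [AddCommGroup G] : pTors p 0 G = ⊥ := by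
  ext x
  simp [mem_pTors, AddSubgroup.mem_bot]

lemma pTors_exists_top (p : ℕ) (G : Type*) [AddCommGroup G] [Finite G]
    (hpG : ∀ g : G, ∃ k : ℕ, p ^ k • g = 0) : ∃ e : ℕ, pTors p e G = ⊤ := by
  have : Fintype G := Fintype.ofFinite G
  choose k hk using hpG
  refine ⟨Finset.univ.sup k, ?_⟩
  rw [eq_top_iff]
  intro x _
  exact pTors_mono p G (Finset.le_sup (Finset.mem_univ x)) (hk x)

lemma modular_law {G : Type*} [AddCommGroup G] (A T M : AddSubgroup G) (h : M ≤ T) :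
    (A ⊔ M) ⊓ T = (A ⊓ T) ⊔ M := by
  apply le_antisymm
  · rintro x ⟨hx1, hxT⟩
    obtain ⟨a, ha, m, hm, rfl⟩ := AddSubgroup.mem_sup.1 hx1
    have haT : a ∈ T := by
      have : a + m - m ∈ T := T.sub_mem hxT (h hm)
      simpa using this
    exact AddSubgroup.mem_sup.2 ⟨a, ⟨ha, haT⟩, m, hm, rfl⟩
  · exact sup_le (le_inf (inf_le_left.trans le_sup_left) inf_le_right)
      (le_inf le_sup_right h)

lemma eq_of_between_prime_relindex {G : Type*} [AddCommGroup G] {p : ℕ} (hp : p.Prime)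
    {M T K : AddSubgroup G} (hMK : M ≤ K) (hKT : K ≤ T) (hrel : M.relIndex T = p) :
    K = M ∨ K = T := by
  have h1 : M.relIndex K * K.relIndex T = p := by
    rw [AddSubgroup.relIndex_mul_relIndex M K T hMK hKT, hrel]
  rcases (hp.eq_one_or_self_of_dvd _ ⟨_, h1.symm⟩) with ha | ha
  · left
    exact le_antisymm (AddSubgroup.relIndex_eq_one.1 ha) hMK
  · right
    rw [ha] at h1
    have : K.relIndex T = 1 := by
      have hp0 : 0 < p := hp.pos
      have := Nat.eq_of_mul_eq_mul_left hp0 (h1.trans (mul_one p).symm)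
      exact this
    exact le_antisymm hKT (AddSubgroup.relIndex_eq_one.1 this)

/-- The lower `T`-level `ℓ_T(M) = 1 + max{ i : T[p^i] ⊆ M ∩ T }` of a subgroup `M`.
For `T = ⊤` this is the `G`-level `ℓ(M)`. -/
noncomputable def levelL (p : ℕ) {G : Type*} [AddCommGroup G] (T M : AddSubgroup G) : ℕ :=
  1 + sSup {i : ℕ | pTors p i G ⊓ T ≤ M ⊓ T}

/-- The upper `T`-level `L_T(M) = min{ j : T[p^j] + (M ∩ T) = T }` of a subgroup `M`.
For `T = ⊤` this is the `G`-level `L(M)`. -/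
noncomputable def levelU (p : ℕ) {G : Type*} [AddCommGroup G] (T M : AddSubgroup G) : ℕ :=
  sInf {j : ℕ | (pTors p j G ⊓ T) ⊔ (M ⊓ T) = T}

/-- The subgroup `pG` of `G`. -/
def pMul (p : ℕ) (G : Type*) [AddCommGroup G] : AddSubgroup G :=
  (AddMonoidHom.mk' (fun x : G => p • x) (fun a b => smul_add p a b)).range

/-- For `T` of index `p` and `M ⊆ T` of index `p²` in `G`, with `G`-levels `(l, L)`
and `T`-levels `(l_c, L_c)` of `M`: `l_c = L_c`; moreover `G[p^l] ⊆ T` iff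
`l = l_c = L_c < L`, and `G[p^l] ⊄ T` iff `l ≤ l_c = L_c = L`. -/
theorem stmt10 (p : ℕ) [Fact p.Prime] (G : Type*) [AddCommGroup G] [Finite G]
    (hpG : ∀ g : G, ∃ k : ℕ, p ^ k • g = 0)
    (T M : AddSubgroup G) (hT : T.index = p) (hM : M.index = p ^ 2) (hMT : M ≤ T) :
    levelL p T M = levelU p T M ∧
    (pTors p (levelL p ⊤ M) G ≤ T ↔
      (levelL p ⊤ M = levelL p T M ∧ levelL p T M = levelU p T M ∧
        levelU p T M < levelU p ⊤ M)) ∧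
    (¬ pTors p (levelL p ⊤ M) G ≤ T ↔
      (levelL p ⊤ M ≤ levelL p T M ∧ levelL p T M = levelU p T M ∧
        levelU p T M = levelU p ⊤ M)) := by
  obtain ⟨e, he⟩ := pTors_exists_top p G hpG
  have hp : p.Prime := Fact.out
  have hp2 : 2 ≤ p := hp.two_le
  have hMne : M ≠ ⊤ := by
    intro h; rw [h, AddSubgroup.index_top] at hM; nlinarith [sq_nonneg p]
  have hTne : T ≠ ⊤ := by
    intro h; rw [h, AddSubgroup.index_top] at hT; omega
  have hMT_ne : M ≠ T := by
    intro h; rw [h, hT] at hM; nlinarith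
  have hrelMT : M.relIndex T = p := by
    have h1 := AddSubgroup.relIndex_mul_index hMT
    rw [hT, hM, pow_two] at h1
    exact Nat.eq_of_mul_eq_mul_right hp.pos h1
  -- bounds for the lower-level sets
  have hboundG : ∀ i, pTors p i G ≤ M → i ≤ e := by
    intro i hi
    by_contra hc; push_neg at hc
    have h1 : pTors p e G ≤ M := (pTors_mono p G hc.le).trans hi
    rw [he, top_le_iff] at h1
    exact hMne h1
  have hboundT : ∀ i, pTors p i G ⊓ T ≤ M → i ≤ e := by
    intro i hi
    by_contra hc; push_neg at hc
    have h1 : pTors p e G ⊓ T ≤ M := (inf_le_inf_right T (pTors_mono p G hc.le)).trans hi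
    rw [he, top_inf_eq] at h1
    exact hMT_ne (le_antisymm hMT h1)
  have h0G : pTors p 0 G ≤ M := by rw [pTors_zero]; exact bot_le
  have h0T : pTors p 0 G ⊓ T ≤ M := inf_le_left.trans h0G
  set mG := sSup {i : ℕ | pTors p i G ≤ M} with hmGdef
  set mT := sSup {i : ℕ | pTors p i G ⊓ T ≤ M} with hmTdef
  set L := sInf {j : ℕ | pTors p j G ⊔ M = ⊤} with hLdef
  have hmG_mem : pTors p mG G ≤ M :=
    Nat.sSup_mem (s := {i : ℕ | pTors p i G ≤ M}) ⟨0, h0G⟩ ⟨e, fun i hi => hboundG i hi⟩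
  have hmG_max : ∀ i, pTors p i G ≤ M → i ≤ mG :=
    fun i hi => le_csSup ⟨e, fun j hj => hboundG j hj⟩ hi
  have hmG1 : ¬ pTors p (mG + 1) G ≤ M := by
    intro h; have := hmG_max _ h; omega
  have hmT_mem : pTors p mT G ⊓ T ≤ M :=
    Nat.sSup_mem (s := {i : ℕ | pTors p i G ⊓ T ≤ M}) ⟨0, h0T⟩ ⟨e, fun i hi => hboundT i hi⟩
  have hmT_max : ∀ i, pTors p i G ⊓ T ≤ M → i ≤ mT :=
    fun i hi => le_csSup ⟨e, fun j hj => hboundT j hj⟩ hi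
  have hmT1 : ¬ pTors p (mT + 1) G ⊓ T ≤ M := by
    intro h; have := hmT_max _ h; omega
  have hmGmT : mG ≤ mT := hmT_max mG (inf_le_left.trans hmG_mem)
  have hmaxT : ∀ K : AddSubgroup G, M ≤ K → K ≤ T → K = M ∨ K = T :=
    fun K h1 h2 => eq_of_between_prime_relindex hp h1 h2 hrelMT
  have hupT : ∀ j, ((pTors p j G ⊓ T) ⊔ M = T) ↔ ¬ (pTors p j G ⊓ T ≤ M) := by
    intro j
    constructor
    · intro hj hle
      rw [sup_eq_right.2 hle] at hj
      exact hMT_ne hj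
    · intro hnle
      rcases hmaxT _ le_sup_right (sup_le inf_le_right hMT) with h | h
      · exact absurd (le_sup_left.trans h.le) hnle
      · exact h
  -- value of the upper T-level
  have hLc : sInf {j : ℕ | (pTors p j G ⊓ T) ⊔ (M ⊓ T) = T} = mT + 1 := by
    simp only [show M ⊓ T = M from inf_eq_left.2 hMT]
    apply le_antisymm
    · exact Nat.sInf_le ((hupT (mT + 1)).2 hmT1)
    · apply le_csInf ⟨mT + 1, (hupT (mT + 1)).2 hmT1⟩
      intro j hj
      have hj' := (hupT j).1 hj
      by_contra hc; push_neg at hc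
      exact hj' ((inf_le_inf_right T (pTors_mono p G (by omega))).trans hmT_mem)
  have htop_mem : pTors p e G ⊔ M = ⊤ := by rw [he]; exact top_sup_eq M
  have hL_mem : pTors p L G ⊔ M = ⊤ :=
    Nat.sInf_mem (s := {j : ℕ | pTors p j G ⊔ M = ⊤}) ⟨e, htop_mem⟩
  have hL_min : ∀ j, pTors p j G ⊔ M = ⊤ → L ≤ j := fun j hj => Nat.sInf_le hj
  -- rewriting the levels
  have hlevL_top : levelL p ⊤ M = mG + 1 := by
    simp only [levelL, inf_top_eq]
    rw [← hmGdef]; omega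
  have hlevL_T : levelL p T M = mT + 1 := by
    simp only [levelL, show M ⊓ T = M from inf_eq_left.2 hMT]
    rw [← hmTdef]; omega
  have hlevU_T : levelU p T M = mT + 1 := by
    simp only [levelU]; exact hLc
  have hlevU_top : levelU p ⊤ M = L := by
    simp only [levelU, inf_top_eq]; rfl
  -- Case A: G[p^l] ≤ T
  have hcaseA : pTors p (mG + 1) G ≤ T → mT = mG ∧ mT + 1 < L := by
    intro h
    have hmTmG : mT = mG := by
      apply le_antisymm _ hmGmT
      by_contra hc; push_neg at hc
      have h1 : pTors p (mG + 1) G ⊓ T ≤ M :=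
        (inf_le_inf_right T (pTors_mono p G (by omega))).trans hmT_mem
      rw [inf_eq_left.2 h] at h1
      exact hmG1 h1
    refine ⟨hmTmG, ?_⟩
    have hnot : ∀ j ≤ mG + 1, pTors p j G ⊔ M ≠ ⊤ := by
      intro j hj heq
      have h2 : pTors p j G ⊔ M ≤ T := sup_le ((pTors_mono p G hj).trans h) hMT
      rw [heq, top_le_iff] at h2
      exact hTne h2
    have : ¬ (L ≤ mG + 1) := fun hc => hnot L hc hL_mem
    omega
  -- Case B: G[p^l] ≰ T
  have hcaseB : ¬ pTors p (mG + 1) G ≤ T → L = mT + 1 := by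
    intro h
    have h1 : mT < L := by
      by_contra hc; push_neg at hc
      have hup : pTors p mT G ⊔ M = ⊤ := by
        have h2 := sup_le_sup_right (pTors_mono p G hc) M
        rw [hL_mem] at h2
        exact top_unique h2
      have hTM : T ≤ M := by
        have h2 : (pTors p mT G ⊔ M) ⊓ T = (pTors p mT G ⊓ T) ⊔ M := modular_law _ _ _ hMT
        rw [hup, top_inf_eq] at h2
        rw [h2]
        exact sup_le hmT_mem le_rfl
      exact hMT_ne (le_antisymm hMT hTM)
    have hAle : ¬ pTors p (mT + 1) G ≤ T :=
      fun hh => h ((pTors_mono p G (by omega)).trans hh)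
    have hKtop : pTors p (mT + 1) G ⊔ M = ⊤ := by
      rcases hmaxT ((pTors p (mT + 1) G ⊔ M) ⊓ T) (le_inf le_sup_right hMT) inf_le_right
        with hK | hK
      · exact absurd ((inf_le_inf_right T le_sup_left).trans hK.le) hmT1
      · have hTK : T ≤ pTors p (mT + 1) G ⊔ M := inf_eq_right.1 hK
        have hMK : M ≤ pTors p (mT + 1) G ⊔ M := le_sup_right
        have e1 := AddSubgroup.relIndex_mul_relIndex M T (pTors p (mT + 1) G ⊔ M) hMT hTK
        have e2 := AddSubgroup.relIndex_mul_index hMK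
        rw [hrelMT] at e1
        have e3 : T.relIndex (pTors p (mT + 1) G ⊔ M) * (pTors p (mT + 1) G ⊔ M).index = p := by
          have h3 : p * (T.relIndex (pTors p (mT + 1) G ⊔ M) *
              (pTors p (mT + 1) G ⊔ M).index) = p * p := by
            rw [← mul_assoc, e1, e2, hM, pow_two]
          exact Nat.eq_of_mul_eq_mul_left hp.pos h3
        rcases hp.eq_one_or_self_of_dvd _ ⟨_, e3.symm⟩ with h4 | h4
        · exact absurd (le_sup_left.trans (AddSubgroup.relIndex_eq_one.1 h4)) hAle
        · have h5 : (pTors p (mT + 1) G ⊔ M).index = 1 := by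
            rw [h4] at e3
            exact Nat.eq_of_mul_eq_mul_left hp.pos (e3.trans (mul_one p).symm)
          exact AddSubgroup.index_eq_one.1 h5
    exact le_antisymm (hL_min _ hKtop) h1
  rw [hlevL_top, hlevL_T, hlevU_T, hlevU_top]
  refine ⟨rfl, ⟨?_, ?_⟩, ⟨?_, ?_⟩⟩
  · intro h
    obtain ⟨h1, h2⟩ := hcaseA h
    exact ⟨by omega, rfl, h2⟩
  · rintro ⟨-, -, h3⟩
    by_contra hc
    have := hcaseB hc
    omega
  · intro h
    exact ⟨by omega, rfl, (hcaseB h).symm⟩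
  · rintro ⟨-, -, h3⟩ hc
    obtain ⟨-, h2⟩ := hcaseA hc
    omega
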